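/- arXiv:1704.05621 — 4 statements merged into one kernel-verified Lean document; each statement's English description precedes it below -/
import Mathlib

section
/- Let P be a naturally labeled partial order on {1,2,…,m}. Then for every integer n ≥ 0, F_P(q,[n]_q) = [m]_q! · Σ_{σ ∈ PP(P,n)} q^{|σ|}, as polynomials in q. (Equivalently, the q-Ehrhart polynomial of the order polytope of the dual poset of P equals F_P(q,x)/[m]_q!.) -/
open Finset Polynomial LaurentPolynomial

attribute [local instance] Classical.propDecidable

/-- The value `π_i` of the word of `π` at the 1-based position `i` (values in `{1, …, m}`). -/
def wordAt (m : ℕ) (π : Equiv.Perm (Fin m)) (i : ℕ) : ℕ :=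
  if h : i - 1 < m then ((π ⟨i - 1, h⟩ : Fin m) : ℕ) + 1 else 0

/-- The descent set `Des(π) ⊆ {1, …, m-1}` (1-based positions). -/
def DesSet (m : ℕ) (π : Equiv.Perm (Fin m)) : Finset ℕ :=
  (Finset.Ico 1 m).filter fun i => wordAt m π (i + 1) < wordAt m π i

/-- The number of descents `des(π)`. -/
def desNum (m : ℕ) (π : Equiv.Perm (Fin m)) : ℕ := (DesSet m π).card

/-- The major index `maj(π)`. -/
def majIdx (m : ℕ) (π : Equiv.Perm (Fin m)) : ℕ := ∑ i ∈ DesSet m π, i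

/-- The partial order `P` on `{1,…,m}` (encoded as `Fin m`) is naturally labeled:
`x ≤_P y` implies `x ≤ y` as integers. -/
def NatLabeled (m : ℕ) (P : PartialOrder (Fin m)) : Prop :=
  ∀ x y : Fin m, P.le x y → x ≤ y

/-- `π` is a linear extension of `P`: `π_i ≤_P π_j` implies `i ≤ j`. -/
def IsLinExt (m : ℕ) (P : PartialOrder (Fin m)) (π : Equiv.Perm (Fin m)) : Prop :=
  ∀ i j : Fin m, P.le (π i) (π j) → i ≤ j

/-- `mc(x)`: the maximum number of elements of a chain of `P` whose largest element is `x`. -/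
noncomputable def mc (m : ℕ) (P : PartialOrder (Fin m)) (x : Fin m) : ℕ :=
  sSup {k : ℕ | ∃ s : Finset (Fin m),
    s.card = k ∧ IsChain P.le ↑s ∧ x ∈ s ∧ ∀ y ∈ s, P.le y x}

/-- `m̄c(x)`: the maximum number of elements of a chain of `P` whose smallest element is `x`. -/
noncomputable def mcUp (m : ℕ) (P : PartialOrder (Fin m)) (x : Fin m) : ℕ :=
  sSup {k : ℕ | ∃ s : Finset (Fin m),
    s.card = k ∧ IsChain P.le ↑s ∧ x ∈ s ∧ ∀ y ∈ s, P.le x y}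

/-- The `q`-integer `[n]_q` for `n ∈ ℤ`, as a Laurent polynomial:
`[n]_q = 1 + q + ⋯ + q^{n-1}` for `n ≥ 0` and `[-n]_q = -q^{-n} [n]_q`. -/
noncomputable def qInt (n : ℤ) : LaurentPolynomial ℤ :=
  if 0 ≤ n then ∑ i ∈ Finset.range n.toNat, T (i : ℤ)
  else -(T n * ∑ i ∈ Finset.range (-n).toNat, T (i : ℤ))

/-- The polynomial `F_P(q,x) = Σ_{π ∈ L(P)} q^{maj π} Π_{i=1}^m ([i - des π]_q + q^{i - des π} x)`,
an element of `(ℤ[q,q⁻¹])[x]` (it in fact lies in `ℤ[q,x]`). -/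
noncomputable def Fpoly (m : ℕ) (P : PartialOrder (Fin m)) : Polynomial (LaurentPolynomial ℤ) :=
  ∑ π ∈ Finset.univ.filter (fun π => IsLinExt m P π),
    Polynomial.C (T (majIdx m π : ℤ)) *
      ∏ i ∈ Finset.Icc 1 m,
        (Polynomial.C (qInt ((i : ℤ) - desNum m π)) +
          Polynomial.C (T ((i : ℤ) - desNum m π)) * Polynomial.X)

/-- The Newton polygon of an element of `(ℤ[q,q⁻¹])[x]`, in the `(q,x)`-plane. -/
noncomputable def NTL (f : Polynomial (LaurentPolynomial ℤ)) : Set (ℝ × ℝ) :=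
  convexHull ℝ {p : ℝ × ℝ | ∃ (i : ℤ) (k : ℕ), (f.coeff k).coeff i ≠ 0 ∧ p = ((i : ℝ), (k : ℝ))}

/-- The Newton polygon of an element of `ℤ[q][x]`, in the `(q,x)`-plane. -/
noncomputable def NTP (f : Polynomial (Polynomial ℤ)) : Set (ℝ × ℝ) :=
  convexHull ℝ {p : ℝ × ℝ | ∃ (i k : ℕ), (f.coeff k).coeff i ≠ 0 ∧ p = ((i : ℝ), (k : ℝ))}

/-- The polygon `C(a_1,…,a_m;h)`: the convex hull of `(0,0)`, `(a_1+⋯+a_i, i)` for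
`1 ≤ i ≤ m`, `(h,m)` and `(h-m,0)`. -/
noncomputable def Cpolygon (m : ℕ) (a : ℕ → ℕ) (h : ℕ) : Set (ℝ × ℝ) :=
  convexHull ℝ ({((0 : ℝ), (0 : ℝ)), ((h : ℝ), (m : ℝ)), ((h : ℝ) - (m : ℝ), (0 : ℝ))} ∪
    {p : ℝ × ℝ | ∃ i ∈ Finset.Icc 1 m, p = ((∑ j ∈ Finset.Icc 1 i, (a j : ℝ)), (i : ℝ))})

/-- The index of the descent block of `π` containing the 1-based position `j`. -/
def blockIdx (m : ℕ) (π : Equiv.Perm (Fin m)) (j : ℕ) : ℕ :=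
  1 + ((Finset.Ico 1 j).filter (fun i => i ∉ DesSet m π)).card

/-- `DB_i(π)`: the set of entries of the `i`-th descent block of `π`. -/
def DB (m : ℕ) (π : Equiv.Perm (Fin m)) (i : ℕ) : Finset (Fin m) :=
  Finset.univ.filter fun x => blockIdx m π (((π.symm x : Fin m) : ℕ) + 1) = i

/-- `PP(P,n)`: the set of `P`-partitions (order-reversing maps) with all parts at most `n`,
encoded as functions `Fin m → Fin (n+1)`. -/
noncomputable def PPset (m : ℕ) (P : PartialOrder (Fin m)) (n : ℕ) :
    Finset (Fin m → Fin (n + 1)) :=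
  Finset.univ.filter fun σ => ∀ x y : Fin m, P.le x y → σ y ≤ σ x

/-- `|σ| = σ(1) + ⋯ + σ(m)`. -/
def sizePP (m n : ℕ) (σ : Fin m → Fin (n + 1)) : ℕ := ∑ i : Fin m, (σ i : ℕ)

/-- The `q`-integer `[n]_q` for `n ∈ ℕ`, as an ordinary polynomial in `q`. -/
noncomputable def qIntP (n : ℕ) : Polynomial ℤ := ∑ i ∈ Finset.range n, Polynomial.X ^ i

/-- The `q`-factorial `[n]_q!`. -/
noncomputable def qFact (n : ℕ) : Polynomial ℤ := ∏ i ∈ Finset.Icc 1 n, qIntP i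

/-- The dual poset `P̄` : `x ≤_{P̄} y` iff `y ≤_P x`. -/
def dualP (m : ℕ) (P : PartialOrder (Fin m)) : PartialOrder (Fin m) where
  le x y := P.le y x
  lt x y := P.lt y x
  le_refl x := P.le_refl x
  le_trans a b c h1 h2 := P.le_trans c b a h2 h1
  le_antisymm a b h1 h2 := P.le_antisymm a b h2 h1
  lt_iff_le_not_ge a b := P.lt_iff_le_not_ge b a

/-- The canonical ring map `ℤ[q] → ℚ(q)`. -/
noncomputable def toRF : Polynomial ℤ →+* RatFunc ℚ :=
  (algebraMap (Polynomial ℚ) (RatFunc ℚ)).comp (Polynomial.mapRingHom (Int.castRingHom ℚ))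

/-- `W(n·O(P), q) = Σ_σ q^{|σ|}`, the sum being over all order-preserving maps
`σ : P → {0,…,n}`. -/
noncomputable def Wpoly (m : ℕ) (P : PartialOrder (Fin m)) (n : ℕ) : Polynomial ℤ :=
  ∑ σ ∈ (Finset.univ.filter fun σ : Fin m → Fin (n + 1) =>
      ∀ x y : Fin m, P.le x y → σ x ≤ σ y),
    Polynomial.X ^ (∑ i : Fin m, (σ i : ℕ))

/-- The polynomial `q^{mj - s(s-1)/2} Π_{i=1}^{s-1} (x - [i]_q) Π_{i=1}^{m-s} (q^i x + [i]_q)`. -/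
noncomputable def tSummand (m s mj : ℕ) : Polynomial (LaurentPolynomial ℤ) :=
  Polynomial.C (T ((mj : ℤ) - (s * (s - 1) / 2 : ℕ))) *
    (∏ i ∈ Finset.Icc 1 (s - 1), (Polynomial.X - Polynomial.C (qInt (i : ℤ)))) *
    ∏ i ∈ Finset.Icc 1 (m - s),
      (Polynomial.C (T (i : ℤ)) * Polynomial.X + Polynomial.C (qInt (i : ℤ)))

/-- `t(π,k)`: the coefficient of `x^{k-1}` in
`q^{maj π - s(s-1)/2} Π_{i=1}^{s-1} (x - [i]_q) Π_{i=1}^{m-s} (q^i x + [i]_q)`,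
where `s = des π`. -/
noncomputable def tpoly (m : ℕ) (π : Equiv.Perm (Fin m)) (k : ℕ) : LaurentPolynomial ℤ :=
  (tSummand m (desNum m π) (majIdx m π)).coeff (k - 1)

/-- The polynomial `A(q,x) = Π_{i=1}^m (q^i x + [i]_q)`. -/
noncomputable def Apoly (m : ℕ) : Polynomial (LaurentPolynomial ℤ) :=
  ∏ i ∈ Finset.Icc 1 m,
    (Polynomial.C (T (i : ℤ)) * Polynomial.X + Polynomial.C (qInt (i : ℤ)))

/-- The polynomial `B(q,x) = x Σ_{π ∈ L(P), des π ≥ 1} q^{maj π - s(s-1)/2}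
Π_{i=1}^{s-1} (x - [i]_q) Π_{i=1}^{m-s} (q^i x + [i]_q)`, where `s = des π`;
one has `F_P(q,x) = A(q,x) + B(q,x)`. -/
noncomputable def Bpoly (m : ℕ) (P : PartialOrder (Fin m)) : Polynomial (LaurentPolynomial ℤ) :=
  Polynomial.X *
    ∑ π ∈ Finset.univ.filter (fun π => IsLinExt m P π ∧ 1 ≤ desNum m π),
      tSummand m (desNum m π) (majIdx m π)

lemma qInt_natCast (k : ℕ) : qInt (k : ℤ) = ∑ i ∈ Finset.range k, T (i : ℤ) := by
  simp [qInt]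

lemma qInt_zero : qInt 0 = 0 := by simp [qInt]

lemma qInt_add_nat (a b : ℕ) : qInt ((a : ℤ) + b) = qInt a + T (a : ℤ) * qInt b := by
  rw [show ((a:ℤ) + b) = ((a + b : ℕ) : ℤ) by push_cast; ring]
  rw [qInt_natCast, qInt_natCast, qInt_natCast, Finset.sum_range_add, Finset.mul_sum]
  congr 1
  exact Finset.sum_congr rfl fun i _ => by rw [Nat.cast_add, T_add]

lemma qInt_shift (a : ℤ) (k : ℕ) : qInt a + T a * qInt (k : ℤ) = qInt (a + k) := by
  rcases le_or_gt 0 a with ha | ha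
  · obtain ⟨c, rfl⟩ := Int.eq_ofNat_of_zero_le ha
    rw [qInt_add_nat]
  · obtain ⟨b, hb⟩ : ∃ b : ℕ, a = -(b : ℤ) := ⟨(-a).toNat, by omega⟩
    have hqa : qInt a = -(T a * qInt ((b : ℕ) : ℤ)) := by
      rw [qInt, if_neg (by omega), qInt_natCast, show (-a).toNat = b by omega]
    rcases le_or_gt b k with hbk | hbk
    · have h1 : (k : ℤ) = (b : ℤ) + ((k - b : ℕ) : ℤ) := by omega
      have h2 : a + (k:ℤ) = ((k - b : ℕ) : ℤ) := by omega
      have hTT : (T a * T (b : ℤ) : LaurentPolynomial ℤ) = 1 := by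
        rw [← T_add, show a + (b:ℤ) = 0 by omega, T_zero]
      rw [h2, hqa, h1, qInt_add_nat, mul_add, neg_add_cancel_left, ← mul_assoc, hTT, one_mul]
    · have h1 : (b : ℤ) = (k : ℤ) + ((b - k : ℕ) : ℤ) := by omega
      have hneg : qInt (a + (k:ℤ)) = -(T (a + k) * qInt ((b - k : ℕ) : ℤ)) := by
        rw [qInt, if_neg (by omega), qInt_natCast, show (-(a+k)).toNat = b - k by omega]
      rw [hqa, hneg, h1, qInt_add_nat, T_add]
      ring

def cfun (m : ℕ) (π : Equiv.Perm (Fin m)) (j : ℕ) : ℕ :=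
  ((DesSet m π).filter fun s => j < s).card

lemma desSet_lt {m : ℕ} {π : Equiv.Perm (Fin m)} {s : ℕ} (hs : s ∈ DesSet m π) :
    1 ≤ s ∧ s < m := by
  simp only [DesSet, Finset.mem_filter, Finset.mem_Ico] at hs; exact ⟨hs.1.1, hs.1.2⟩

lemma cfun_eq_zero {m : ℕ} (π : Equiv.Perm (Fin m)) {j : ℕ} (h : m ≤ j + 1) :
    cfun m π j = 0 := by
  rw [cfun, Finset.card_eq_zero, Finset.filter_eq_empty_iff]
  intro s hs
  have := desSet_lt hs
  omega

lemma cfun_zero {m : ℕ} (π : Equiv.Perm (Fin m)) : cfun m π 0 = desNum m π := by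
  rw [cfun, desNum]
  congr 1
  rw [Finset.filter_eq_self]
  intro s hs
  exact (desSet_lt hs).1

lemma cfun_succ {m : ℕ} (π : Equiv.Perm (Fin m)) (j : ℕ) :
    cfun m π j = cfun m π (j + 1) + (if j + 1 ∈ DesSet m π then 1 else 0) := by
  rw [cfun, cfun]
  have h1 : ((DesSet m π).filter fun s => j < s) =
      ((DesSet m π).filter fun s => j + 1 < s) ∪ ((DesSet m π).filter fun s => s = j + 1) := by
    rw [← Finset.filter_or]
    exact Finset.filter_congr fun s _ => by constructor <;> intro <;> omega
  rw [h1, Finset.card_union_of_disjoint]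
  · congr 1
    rw [Finset.filter_eq']
    split <;> simp
  · simp only [Finset.disjoint_left, Finset.mem_filter]
    rintro s ⟨-, h2⟩ ⟨-, h3⟩
    omega

lemma sum_cfun {m : ℕ} (π : Equiv.Perm (Fin m)) :
    ∑ j ∈ Finset.range m, cfun m π j = majIdx m π := by
  unfold cfun majIdx
  simp_rw [Finset.card_filter]
  rw [Finset.sum_comm]
  refine Finset.sum_congr rfl fun s hs => ?_
  have hsm := desSet_lt hs
  rw [← Finset.card_filter]
  have : (Finset.range m).filter (fun j => j < s) = Finset.range s := by
    ext j; simp only [Finset.mem_filter, Finset.mem_range]; omega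
  simp [this]

lemma desNum_le {m : ℕ} (π : Equiv.Perm (Fin m)) : desNum m π ≤ m - 1 := by
  have := Finset.card_filter_le (Finset.Ico 1 m) fun i => wordAt m π (i + 1) < wordAt m π i
  simpa [desNum, DesSet] using this

lemma anti_of_adj {m : ℕ} (f : Fin m → ℕ)
    (h : ∀ j : ℕ, (hj : j + 1 < m) → f ⟨j + 1, hj⟩ ≤ f ⟨j, by omega⟩) :
    ∀ b a : ℕ, (hb : b < m) → (ha : a < m) → a ≤ b → f ⟨b, hb⟩ ≤ f ⟨a, ha⟩ := by
  intro b
  induction b with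
  | zero => intro a _ _ hab; have : a = 0 := by omega
            subst this; exact le_refl _
  | succ b ih =>
    intro a hb ha hab
    rcases Nat.eq_or_lt_of_le hab with h1 | h1
    · subst h1; exact le_refl _
    · exact le_trans (h b hb) (ih a (by omega) ha (by omega))

noncomputable def boxF (m M : ℕ) : Finset (Fin m → ℕ) :=
  (Fintype.piFinset fun _ => Finset.range (M + 1)).filter fun f =>
    ∀ j : ℕ, (hj : j + 1 < m) → f ⟨j + 1, hj⟩ ≤ f ⟨j, by omega⟩

noncomputable def boxS (m M : ℕ) : LaurentPolynomial ℤ :=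
  ∑ f ∈ boxF m M, T ((∑ i, f i : ℕ) : ℤ)

lemma boxS_zero (M : ℕ) : boxS 0 M = 1 := by
  have : boxF 0 M = {(fun i => 0 : Fin 0 → ℕ)} := by
    ext f
    simp only [boxF, Finset.mem_filter, Fintype.mem_piFinset, Finset.mem_singleton]
    constructor
    · intro _; funext i; exact absurd i.2 (by omega)
    · intro h; subst h; refine ⟨fun i => absurd i.2 (by omega), fun j hj => by omega⟩
  simp [boxS, this]

lemma boxS_succ (m M : ℕ) :
    boxS (m + 1) M = ∑ k ∈ Finset.range (M + 1), T (k : ℤ) * boxS m k := by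
  unfold boxS
  simp_rw [Finset.mul_sum]
  rw [Finset.sum_sigma']
  refine Finset.sum_nbij' (fun f => ⟨f ⟨0, by omega⟩, fun i => f i.succ⟩)
    (fun p => Fin.cases p.1 p.2) ?_ ?_ ?_ ?_ ?_
  · rintro f hf
    simp only [boxF, Finset.mem_filter, Fintype.mem_piFinset, Finset.mem_range] at hf
    obtain ⟨hf1, hf2⟩ := hf
    refine Finset.mem_sigma.2 ⟨Finset.mem_range.2 (hf1 _), ?_⟩
    simp only [boxF, Finset.mem_filter, Fintype.mem_piFinset, Finset.mem_range]
    constructor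
    · intro i
      have h0 : (f i.succ) ≤ f ⟨0, by omega⟩ :=
        anti_of_adj f hf2 (i.succ : ℕ) 0 (by omega) (by omega) (by omega)
      omega
    · intro j hj
      have := hf2 (j + 1) (by omega)
      convert this using 2 <;> simp [Fin.succ, Fin.ext_iff]
  · rintro ⟨k, g⟩ hp
    simp only [Finset.mem_sigma, Finset.mem_range, boxF, Finset.mem_filter,
      Fintype.mem_piFinset] at hp
    obtain ⟨hk, hg1, hg2⟩ := hp
    simp only [boxF, Finset.mem_filter, Fintype.mem_piFinset, Finset.mem_range]
    constructor
    · intro i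
      refine Fin.cases ?_ ?_ i
      · simpa using hk
      · intro i2
        simp only [Fin.cases_succ]
        have h0 : g i2 ≤ k := by have := hg1 i2; omega
        have hkM : k < M + 1 := by omega
        omega
    · intro j hj
      rcases Nat.eq_zero_or_pos j with rfl | hj0
      · show (Fin.cases k g (⟨1, hj⟩ : Fin (m+1)) : ℕ) ≤ (Fin.cases k g ⟨0, by omega⟩ : ℕ)
        have h1 : (⟨1, hj⟩ : Fin (m + 1)) = (⟨0, by omega⟩ : Fin m).succ := by
          simp [Fin.ext_iff]
        have h0 : (⟨0, by omega⟩ : Fin (m+1)) = 0 := by simp [Fin.ext_iff]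
        rw [h1, h0, Fin.cases_succ, Fin.cases_zero]
        have := hg1 ⟨0, by omega⟩
        omega
      · obtain ⟨j', rfl⟩ : ∃ j', j = j' + 1 := ⟨j - 1, by omega⟩
        show (Fin.cases k g (⟨j' + 1 + 1, hj⟩ : Fin (m+1)) : ℕ) ≤ (Fin.cases k g ⟨j' + 1, by omega⟩ : ℕ)
        have h1 : (⟨j' + 1 + 1, hj⟩ : Fin (m + 1)) = (⟨j' + 1, by omega⟩ : Fin m).succ := by
          simp [Fin.ext_iff]
        have h2 : (⟨j' + 1, by omega⟩ : Fin (m + 1)) = (⟨j', by omega⟩ : Fin m).succ := by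
          simp [Fin.ext_iff]
        rw [h1, h2, Fin.cases_succ, Fin.cases_succ]
        exact hg2 j' (by omega)
  · intro f hf
    funext i
    show (Fin.cases (f ⟨0, by omega⟩) (fun i => f i.succ) i : ℕ) = f i
    refine Fin.cases ?_ ?_ i
    · rw [Fin.cases_zero]; congr 1 <;> simp [Fin.ext_iff]
    · intro i2; rw [Fin.cases_succ]
  · rintro ⟨k, g⟩ hp
    refine Sigma.ext ?_ ?_
    · simp
    · simp only [heq_eq_eq]
      funext i
      simp
  · intro f hf
    simp only
    rw [← T_add]
    congr 1
    have : ∑ i, f i = f ⟨0, by omega⟩ + ∑ i : Fin m, f i.succ := by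
      rw [Fin.sum_univ_succ]
      congr 1
    rw [this]
    push_cast
    ring

lemma prod_Icc_eq_range (f : ℕ → LaurentPolynomial ℤ) (m : ℕ) :
    ∏ i ∈ Finset.Icc 1 m, f i = ∏ j ∈ Finset.range m, f (1 + j) := by
  rw [← Finset.Ico_add_one_right_eq_Icc, Finset.prod_Ico_eq_prod_range]
  simp

lemma qInt_split (a b : ℕ) :
    qInt ((a + b : ℕ) : ℤ) = qInt (a : ℤ) + T (a : ℤ) * qInt (b : ℤ) := by
  have := qInt_add_nat a b
  rwa [show ((a:ℤ) + (b:ℕ)) = ((a + b : ℕ) : ℤ) by push_cast; ring] at this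

lemma tele (m M : ℕ) :
    qInt ((m + 1 : ℕ) : ℤ) *
      ∑ k ∈ Finset.range (M + 1), T (k : ℤ) * ∏ j ∈ Finset.range m, qInt ((k + 1 + j : ℕ) : ℤ)
    = ∏ j ∈ Finset.range (m + 1), qInt ((M + 1 + j : ℕ) : ℤ) := by
  induction M with
  | zero =>
    rw [Finset.sum_range_one, Finset.prod_range_succ]
    simp only [Nat.cast_zero, T_zero, one_mul, zero_add]
    rw [mul_comm, show 1 + m = m + 1 from by omega]
  | succ M ih =>
    rw [Finset.sum_range_succ, mul_add, ih, ← mul_assoc, mul_comm (qInt ((m+1:ℕ):ℤ)) (T ((M+1:ℕ):ℤ)), mul_assoc]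
    have key : qInt ((M + 1 + 1 + m : ℕ) : ℤ) =
        qInt ((M + 1 : ℕ) : ℤ) + T ((M + 1 : ℕ) : ℤ) * qInt ((m + 1 : ℕ) : ℤ) := by
      have := qInt_split (M + 1) (m + 1)
      rwa [show M + 1 + (m + 1) = M + 1 + 1 + m by omega] at this
    have h1 : ∏ j ∈ Finset.range (m + 1), qInt ((M + 1 + 1 + j : ℕ) : ℤ) =
        (∏ j ∈ Finset.range m, qInt ((M + 1 + 1 + j : ℕ) : ℤ)) * qInt ((M + 1 + 1 + m : ℕ) : ℤ) :=
      Finset.prod_range_succ _ _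
    have h2 : ∏ j ∈ Finset.range (m + 1), qInt ((M + 1 + j : ℕ) : ℤ) =
        (∏ j ∈ Finset.range m, qInt ((M + 1 + 1 + j : ℕ) : ℤ)) * qInt ((M + 1 : ℕ) : ℤ) := by
      rw [Finset.prod_range_succ']
      simp only [Nat.add_zero]
      congr 1
      exact Finset.prod_congr rfl fun j _ => by rw [show M + 1 + (j + 1) = M + 1 + 1 + j by omega]
    rw [h1, h2, key]
    ring

lemma box_id (m M : ℕ) :
    (∏ i ∈ Finset.Icc 1 m, qInt (i : ℤ)) * boxS m M =
      ∏ i ∈ Finset.Icc 1 m, qInt ((M + i : ℕ) : ℤ) := by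
  induction m generalizing M with
  | zero => simp [boxS_zero]
  | succ m ih =>
    rw [boxS_succ, Finset.prod_Icc_succ_top (by omega : 1 ≤ m + 1), Finset.mul_sum]
    have step : ∀ k ∈ Finset.range (M + 1),
        (∏ i ∈ Finset.Icc 1 m, qInt (i : ℤ)) * qInt ((m + 1 : ℕ) : ℤ) * (T (k:ℤ) * boxS m k) =
        qInt ((m + 1 : ℕ) : ℤ) * (T (k:ℤ) * ∏ j ∈ Finset.range m, qInt ((k + 1 + j : ℕ) : ℤ)) := by
      intro k _
      have := ih k
      rw [prod_Icc_eq_range (fun i => qInt ((k + i : ℕ) : ℤ)) m] at this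
      simp only [show ∀ j, k + (1 + j) = k + 1 + j from fun j => by omega] at this
      calc (∏ i ∈ Finset.Icc 1 m, qInt (i : ℤ)) * qInt ((m + 1 : ℕ) : ℤ) * (T (k:ℤ) * boxS m k)
          = qInt ((m + 1 : ℕ) : ℤ) * (T (k:ℤ) * ((∏ i ∈ Finset.Icc 1 m, qInt (i : ℤ)) * boxS m k)) := by ring
        _ = _ := by rw [this]
    rw [Finset.sum_congr rfl step, ← Finset.mul_sum, tele m M]
    rw [prod_Icc_eq_range (fun i => qInt ((M + i : ℕ) : ℤ)) (m + 1)]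
    exact Finset.prod_congr rfl fun j _ => by rw [show M + (1 + j) = M + 1 + j by omega]

noncomputable def compatF (m : ℕ) (π : Equiv.Perm (Fin m)) (n : ℕ) : Finset (Fin m → ℕ) :=
  (Fintype.piFinset fun _ => Finset.range (n + 1)).filter fun f =>
    ∀ j : ℕ, (hj : j + 1 < m) →
      f ⟨j + 1, hj⟩ + (if j + 1 ∈ DesSet m π then 1 else 0) ≤ f ⟨j, by omega⟩

lemma cfun_le_desNum {m : ℕ} (π : Equiv.Perm (Fin m)) (j : ℕ) : cfun m π j ≤ desNum m π :=
  Finset.card_filter_le _ _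

lemma cfun_le_of_compat {m n : ℕ} {π : Equiv.Perm (Fin m)} {f : Fin m → ℕ}
    (hf : f ∈ compatF m π n) : ∀ j : ℕ, (hj : j < m) → cfun m π j ≤ f ⟨j, hj⟩ := by
  have hcond := (Finset.mem_filter.1 hf).2
  suffices H : ∀ d j : ℕ, (hj : j < m) → m - 1 - j = d → cfun m π j ≤ f ⟨j, hj⟩ by
    intro j hj; exact H (m - 1 - j) j hj rfl
  intro d
  induction d with
  | zero =>
    intro j hj hd
    rw [cfun_eq_zero π (by omega)]
    exact Nat.zero_le _
  | succ d ih =>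
    intro j hj hd
    have hj1 : j + 1 < m := by omega
    have h1 := hcond j hj1
    have h2 := ih (j + 1) hj1 (by omega)
    rw [cfun_succ π j]
    omega

lemma compat_sum {m : ℕ} (hm : 1 ≤ m) (π : Equiv.Perm (Fin m)) (n : ℕ) :
    ∑ f ∈ compatF m π n, T ((∑ i, f i : ℕ) : ℤ) =
      if desNum m π ≤ n then T ((majIdx m π : ℤ)) * boxS m (n - desNum m π) else 0 := by
  split
  case isFalse hdn =>
    have : compatF m π n = ∅ := by
      rw [Finset.eq_empty_iff_forall_notMem]
      intro f hf
      have h1 := cfun_le_of_compat hf 0 (by omega)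
      rw [cfun_zero] at h1
      have h2 := (Finset.mem_filter.1 hf).1
      rw [Fintype.mem_piFinset] at h2
      have h3 := Finset.mem_range.1 (h2 ⟨0, by omega⟩)
      omega
    simp [this]
  case isTrue hdn =>
    rw [boxS, Finset.mul_sum]
    refine Finset.sum_nbij' (fun f i => f i - cfun m π (i : ℕ))
      (fun g i => g i + cfun m π (i : ℕ)) ?_ ?_ ?_ ?_ ?_
    · intro f hf
      have hcond := (Finset.mem_filter.1 hf).2
      have hpi := (Finset.mem_filter.1 hf).1
      rw [Fintype.mem_piFinset] at hpi
      have hadj : ∀ j : ℕ, (hj : j + 1 < m) →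
          f ⟨j + 1, hj⟩ - cfun m π (j+1) ≤ f ⟨j, by omega⟩ - cfun m π j := by
        intro j hj
        have h1 := hcond j hj
        have h2 := cfun_succ π j
        have h3 := cfun_le_of_compat hf (j + 1) hj
        omega
      rw [boxF, Finset.mem_filter, Fintype.mem_piFinset]
      constructor
      · intro i
        rw [Finset.mem_range]
        beta_reduce
        have h0 : f i - cfun m π (i : ℕ) ≤ f ⟨0, by omega⟩ - cfun m π 0 := by
          have := anti_of_adj (fun i : Fin m => f i - cfun m π (i : ℕ)) hadj
            (i : ℕ) 0 i.2 (by omega) (by omega)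
          simpa using this
        have h1 := Finset.mem_range.1 (hpi ⟨0, by omega⟩)
        rw [cfun_zero] at h0
        omega
      · intro j hj
        exact hadj j hj
    · intro g hg
      rw [boxF, Finset.mem_filter, Fintype.mem_piFinset] at hg
      obtain ⟨hg1, hg2⟩ := hg
      rw [compatF, Finset.mem_filter, Fintype.mem_piFinset]
      constructor
      · intro i
        rw [Finset.mem_range]
        beta_reduce
        have h1 := Finset.mem_range.1 (hg1 i)
        have h2 := cfun_le_desNum π (i : ℕ)
        omega
      · intro j hj
        show g ⟨j+1, hj⟩ + cfun m π (j+1) + (if j + 1 ∈ DesSet m π then 1 else 0) ≤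
          g ⟨j, by omega⟩ + cfun m π j
        have h1 := hg2 j hj
        have h2 := cfun_succ π j
        omega
    · intro f hf
      funext i
      beta_reduce
      have h5 : cfun m π (i : ℕ) ≤ f i := cfun_le_of_compat hf (i : ℕ) i.2
      omega
    · intro g hg
      funext i
      beta_reduce
      omega
    · intro f hf
      rw [← T_add]
      congr 1
      have hsum : ∑ i, f i = majIdx m π + ∑ i : Fin m, (f i - cfun m π (i : ℕ)) := by
        have hpt : ∀ i : Fin m, f i = cfun m π (i : ℕ) + (f i - cfun m π (i : ℕ)) := by
          intro i
          have h5 : cfun m π (i : ℕ) ≤ f i := cfun_le_of_compat hf (i : ℕ) i.2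
          omega
        rw [Finset.sum_congr rfl fun i _ => hpt i, Finset.sum_add_distrib]
        congr 1
        rw [← sum_cfun π, ← Fin.sum_univ_eq_sum_range (fun j => cfun m π j) m]
      rw [hsum]
      push_cast
      ring

def keyF (m n : ℕ) (σ : Fin m → ℕ) (x : Fin m) : ℕ := (n - σ x) * m + (x : ℕ)

lemma keyF_lt {m n : ℕ} (σ : Fin m → ℕ) (hσ : ∀ x, σ x ≤ n) {x y : Fin m}
    (h : σ y < σ x ∨ (σ x = σ y ∧ (x : ℕ) < (y : ℕ))) : keyF m n σ x < keyF m n σ y := by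
  unfold keyF
  have hx : (x : ℕ) < m := x.2
  have hy : (y : ℕ) < m := y.2
  rcases h with h | ⟨h1, h2⟩
  · have h3 : n - σ x < n - σ y := by have := hσ x; omega
    have : (n - σ x) + 1 ≤ n - σ y := h3
    nlinarith [Nat.mul_le_mul_right m this]
  · rw [h1]; omega

lemma keyF_le_elim {m n : ℕ} (σ : Fin m → ℕ) (hσ : ∀ x, σ x ≤ n) {x y : Fin m}
    (h : keyF m n σ x ≤ keyF m n σ y) : σ y ≤ σ x ∧ (σ x = σ y → (x : ℕ) ≤ (y : ℕ)) := by
  constructor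
  · by_contra hc
    push_neg at hc
    exact absurd (keyF_lt σ hσ (Or.inl hc)) (by omega)
  · intro he
    by_contra hc
    push_neg at hc
    exact absurd (keyF_lt σ hσ (Or.inr ⟨he.symm, hc⟩)) (by omega)

lemma mem_desSet_iff {m : ℕ} (π : Equiv.Perm (Fin m)) (j : ℕ) (hj : j + 1 < m) :
    j + 1 ∈ DesSet m π ↔ ((π ⟨j + 1, hj⟩ : ℕ) < (π ⟨j, by omega⟩ : ℕ)) := by
  unfold DesSet wordAt
  rw [Finset.mem_filter, Finset.mem_Ico]
  rw [show j + 1 + 1 - 1 = j + 1 from rfl, show j + 1 - 1 = j from rfl]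
  rw [dif_pos hj, dif_pos (show j < m by omega)]
  constructor
  · rintro ⟨-, h⟩; omega
  · intro h; exact ⟨by omega, by omega⟩

lemma keyF_inj {m n : ℕ} (σ : Fin m → ℕ) : Function.Injective (keyF m n σ) := by
  intro x y h
  unfold keyF at h
  have hx : (x : ℕ) < m := x.2
  have hy : (y : ℕ) < m := y.2
  have h1 : (m * (n - σ x) + (x : ℕ)) % m = (m * (n - σ y) + (y : ℕ)) % m := by
    rw [Nat.mul_comm m (n - σ x), Nat.mul_comm m (n - σ y), h]
  rw [Nat.mul_add_mod, Nat.mul_add_mod, Nat.mod_eq_of_lt hx, Nat.mod_eq_of_lt hy] at h1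
  exact Fin.ext h1

lemma sort_strictMono {m n : ℕ} (σ : Fin m → ℕ) :
    StrictMono (keyF m n σ ∘ Tuple.sort (keyF m n σ)) :=
  (Tuple.monotone_sort _).strictMono_of_injective
    ((keyF_inj σ).comp (Equiv.injective _))

lemma sort_reflects {m n : ℕ} (σ : Fin m → ℕ) {i j : Fin m}
    (h : keyF m n σ (Tuple.sort (keyF m n σ) i) < keyF m n σ (Tuple.sort (keyF m n σ) j)) :
    (i : ℕ) ≤ (j : ℕ) := by
  have hsm := sort_strictMono (n := n) σ
  have h2 : i < j := hsm.lt_iff_lt.1 h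
  exact Nat.le_of_lt (Fin.lt_def.1 h2)

lemma sort_adj {m n : ℕ} (σ : Fin m → ℕ) (hbd : ∀ x, σ x ≤ n) (j : ℕ) (hj : j + 1 < m) :
    σ (Tuple.sort (keyF m n σ) ⟨j + 1, hj⟩) ≤ σ (Tuple.sort (keyF m n σ) ⟨j, by omega⟩) ∧
      ((Tuple.sort (keyF m n σ) ⟨j + 1, hj⟩ : ℕ) < (Tuple.sort (keyF m n σ) ⟨j, by omega⟩ : ℕ) →
        σ (Tuple.sort (keyF m n σ) ⟨j + 1, hj⟩) < σ (Tuple.sort (keyF m n σ) ⟨j, by omega⟩)) := by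
  have hmono : keyF m n σ (Tuple.sort (keyF m n σ) ⟨j, by omega⟩) ≤
      keyF m n σ (Tuple.sort (keyF m n σ) ⟨j + 1, hj⟩) := by
    have := Tuple.monotone_sort (keyF m n σ)
      (Fin.mk_le_mk.mpr (by omega : j ≤ j + 1) :
        (⟨j, by omega⟩ : Fin m) ≤ ⟨j + 1, hj⟩)
    simpa using this
  have h1 := keyF_le_elim σ hbd hmono
  refine ⟨h1.1, fun hlt => ?_⟩
  rcases Nat.lt_or_ge (σ (Tuple.sort (keyF m n σ) ⟨j + 1, hj⟩))
      (σ (Tuple.sort (keyF m n σ) ⟨j, by omega⟩)) with h2 | h2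
  · exact h2
  · have h3 : σ (Tuple.sort (keyF m n σ) ⟨j, (by omega : j < m)⟩) =
        σ (Tuple.sort (keyF m n σ) ⟨j + 1, hj⟩) := by omega
    have := h1.2 h3
    omega

lemma sort_eq_of_adj {m n : ℕ} (σ : Fin m → ℕ) (π : Equiv.Perm (Fin m))
    (hadj : ∀ j : ℕ, (hj : j + 1 < m) →
      keyF m n σ (π ⟨j, by omega⟩) < keyF m n σ (π ⟨j + 1, hj⟩)) :
    Tuple.sort (keyF m n σ) = π := by
  have claim : ∀ b a : ℕ, (hb : b < m) → (ha : a < m) → a < b →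
      keyF m n σ (π ⟨a, ha⟩) < keyF m n σ (π ⟨b, hb⟩) := by
    intro b
    induction b with
    | zero => intro a _ _ h; omega
    | succ b ih =>
      intro a hb ha hab
      rcases Nat.lt_or_ge a b with h1 | h1
      · exact lt_trans (ih a (by omega) ha h1) (hadj b hb)
      · have : a = b := by omega
        subst this
        exact hadj a hb
  have hsm : StrictMono (keyF m n σ ∘ π) := by
    intro i j hij
    have h1 := claim (j : ℕ) (i : ℕ) j.2 i.2 (Fin.lt_def.1 hij)
    simpa using h1
  symm
  rw [Tuple.eq_sort_iff]
  exact ⟨hsm.monotone, fun i j hij hc => absurd hc (ne_of_lt (hsm hij))⟩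

lemma stanley (m : ℕ) (hm : 1 ≤ m) (P : PartialOrder (Fin m)) (hnat : NatLabeled m P) (n : ℕ) :
    ∑ σ ∈ (Fintype.piFinset fun _ : Fin m => Finset.range (n + 1)).filter
        (fun σ => ∀ x y : Fin m, P.le x y → σ y ≤ σ x),
        (T ((∑ i, σ i : ℕ) : ℤ) : LaurentPolynomial ℤ) =
      ∑ π ∈ Finset.univ.filter (fun π => IsLinExt m P π),
        ∑ f ∈ compatF m π n, T ((∑ i, f i : ℕ) : ℤ) := by
  rw [Finset.sum_sigma']
  refine Finset.sum_nbij'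
    (fun σ => ⟨Tuple.sort (keyF m n σ), fun j => σ (Tuple.sort (keyF m n σ) j)⟩)
    (fun p x => p.2 (p.1.symm x)) ?_ ?_ ?_ ?_ ?_
  · -- backward map into sigma
    intro σ hσ
    rw [Finset.mem_filter, Fintype.mem_piFinset] at hσ
    obtain ⟨hb, hcond⟩ := hσ
    have hbd : ∀ x, σ x ≤ n := fun x => by have := Finset.mem_range.1 (hb x); omega
    rw [Finset.mem_sigma]
    constructor
    · -- linear extension
      rw [Finset.mem_filter]
      refine ⟨Finset.mem_univ _, fun i j hle => ?_⟩
      set π := Tuple.sort (keyF m n σ) with hπ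
      rcases eq_or_ne (π i) (π j) with he | hne
      · obtain rfl := π.injective he
        exact Fin.le_def.mpr (Nat.le_refl _)
      · have h1 : σ (π j) ≤ σ (π i) := hcond _ _ hle
        have h2 : (π i : ℕ) < (π j : ℕ) := by
          have h3 := hnat _ _ hle
          have h4 : (π i : ℕ) ≠ (π j : ℕ) := fun hc => hne (Fin.ext hc)
          have h5 : (π i : ℕ) ≤ (π j : ℕ) := Fin.le_def.mp h3
          exact Nat.lt_of_le_of_ne h5 h4
        have h5 : keyF m n σ (π i) < keyF m n σ (π j) := by
          rcases Nat.eq_or_lt_of_le h1 with h6 | h6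
          · exact keyF_lt σ hbd (Or.inr ⟨h6.symm, h2⟩)
          · exact keyF_lt σ hbd (Or.inl h6)
        exact Fin.le_def.mpr (sort_reflects σ h5)
    · -- compat membership
      rw [compatF, Finset.mem_filter, Fintype.mem_piFinset]
      refine ⟨fun i => hb _, fun j hj => ?_⟩
      dsimp only
      have h1 := sort_adj σ hbd j hj
      split
      case isTrue hd =>
        rw [mem_desSet_iff _ j hj] at hd
        have := h1.2 hd
        omega
      case isFalse hd =>
        have := h1.1
        omega
  · -- forward map into P-partitions
    rintro ⟨π, f⟩ hp
    rw [Finset.mem_sigma, Finset.mem_filter] at hp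
    obtain ⟨⟨-, hlin⟩, hf⟩ := hp
    have hcond : ∀ j : ℕ, (hj : j + 1 < m) →
        f ⟨j + 1, hj⟩ + (if j + 1 ∈ DesSet m π then 1 else 0) ≤ f ⟨j, by omega⟩ :=
      (Finset.mem_filter.1 hf).2
    have hb : ∀ x : Fin m, f x ∈ Finset.range (n + 1) :=
      Fintype.mem_piFinset.1 (Finset.mem_filter.1 hf).1
    rw [Finset.mem_filter, Fintype.mem_piFinset]
    refine ⟨fun x => hb _, fun x y hle => ?_⟩
    have h1 : ((π.symm x : Fin m) : ℕ) ≤ ((π.symm y : Fin m) : ℕ) := by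
      refine Fin.le_def.mp (hlin _ _ ?_)
      rwa [Equiv.apply_symm_apply, Equiv.apply_symm_apply]
    have hadj : ∀ j : ℕ, (hj : j + 1 < m) → f ⟨j + 1, hj⟩ ≤ f ⟨j, by omega⟩ := by
      intro j hj
      have := hcond j hj
      omega
    exact anti_of_adj f hadj ((π.symm y : Fin m) : ℕ) ((π.symm x : Fin m) : ℕ)
      (π.symm y).2 (π.symm x).2 h1
  · -- left inverse
    intro σ hσ
    funext x
    simp
  · -- right inverse
    rintro ⟨π, f⟩ hp
    rw [Finset.mem_sigma, Finset.mem_filter] at hp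
    obtain ⟨⟨-, hlin⟩, hf⟩ := hp
    have hcond : ∀ j : ℕ, (hj : j + 1 < m) →
        f ⟨j + 1, hj⟩ + (if j + 1 ∈ DesSet m π then 1 else 0) ≤ f ⟨j, by omega⟩ :=
      (Finset.mem_filter.1 hf).2
    have hb : ∀ x : Fin m, f x ∈ Finset.range (n + 1) :=
      Fintype.mem_piFinset.1 (Finset.mem_filter.1 hf).1
    have hbd : ∀ x : Fin m, f (π.symm x) ≤ n := fun x => by
      have := Finset.mem_range.1 (hb (π.symm x)); omega
    have hfσ : ∀ j : Fin m, (fun x => f (π.symm x)) (π j) = f j := fun j => by simp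
    have hadj : ∀ j : ℕ, (hj : j + 1 < m) →
        keyF m n (fun x => f (π.symm x)) (π ⟨j, by omega⟩) <
          keyF m n (fun x => f (π.symm x)) (π ⟨j + 1, hj⟩) := by
      intro j hj
      have h1 := hcond j hj
      rcases Nat.lt_or_ge (f ⟨j + 1, hj⟩) (f ⟨j, by omega⟩) with h2 | h2
      · refine keyF_lt _ hbd (Or.inl ?_)
        simp only [Equiv.symm_apply_apply]
        exact h2
      · have h3 : f ⟨j + 1, hj⟩ = f ⟨j, (by omega : j < m)⟩ := by omega
        have h4 : j + 1 ∉ DesSet m π := by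
          intro hd
          rw [if_pos hd] at h1
          omega
        rw [mem_desSet_iff π j hj] at h4
        push_neg at h4
        refine keyF_lt _ hbd (Or.inr ⟨?_, ?_⟩)
        · simp only [Equiv.symm_apply_apply]
          exact h3.symm
        · have h5 : (π ⟨j, (by omega : j < m)⟩ : ℕ) ≠ (π ⟨j + 1, hj⟩ : ℕ) := by
            intro hc
            have h6 : (⟨j, (by omega : j < m)⟩ : Fin m) = ⟨j + 1, hj⟩ :=
              π.injective (Fin.ext hc)
            have := Fin.mk.injEq j (by omega : j < m) (j+1) hj ▸ h6
            simp only [Fin.mk.injEq] at h6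
            omega
          omega
    have hsort := sort_eq_of_adj (fun x => f (π.symm x)) π hadj
    show (⟨Tuple.sort (keyF m n (fun x => f (π.symm x))),
        fun j => f (π.symm (Tuple.sort (keyF m n (fun x => f (π.symm x))) j))⟩ :
        Σ _ : Equiv.Perm (Fin m), Fin m → ℕ) = ⟨π, f⟩
    rw [hsort]
    simp
  · -- weights agree
    intro σ hσ
    congr 2
    exact (Equiv.sum_comp (Tuple.sort (keyF m n σ)) σ).symm

lemma PP_conv (m : ℕ) (P : PartialOrder (Fin m)) (n : ℕ) :
    (∑ σ ∈ PPset m P n, (T ((sizePP m n σ : ℕ) : ℤ) : LaurentPolynomial ℤ)) =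
      ∑ σ ∈ (Fintype.piFinset fun _ : Fin m => Finset.range (n + 1)).filter
        (fun σ => ∀ x y : Fin m, P.le x y → σ y ≤ σ x), T ((∑ i, σ i : ℕ) : ℤ) := by
  refine Finset.sum_nbij' (fun σ x => ((σ x : ℕ))) (fun τ x => (⟨min (τ x) n, by omega⟩ : Fin (n + 1)))
    ?_ ?_ ?_ ?_ ?_
  · intro σ hσ
    have hcond := (Finset.mem_filter.1 hσ).2
    rw [Finset.mem_filter, Fintype.mem_piFinset]
    exact ⟨fun x => Finset.mem_range.2 (σ x).2, fun x y hle => Fin.le_def.mp (hcond x y hle)⟩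
  · intro τ hτ
    rw [Finset.mem_filter, Fintype.mem_piFinset] at hτ
    obtain ⟨hb, hcond⟩ := hτ
    rw [PPset, Finset.mem_filter]
    refine ⟨Finset.mem_univ _, fun x y hle => ?_⟩
    refine Fin.le_def.mpr ?_
    have := hcond x y hle
    simp only
    omega
  · intro σ hσ
    funext x
    refine Fin.ext ?_
    have : (σ x : ℕ) < n + 1 := (σ x).2
    simp only
    omega
  · intro τ hτ
    rw [Finset.mem_filter, Fintype.mem_piFinset] at hτ
    funext x
    have := Finset.mem_range.1 (hτ.1 x)
    simp only
    omega
  · intro σ hσ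
    rfl

lemma Fpoly_eval (m n : ℕ) (P : PartialOrder (Fin m)) :
    (Fpoly m P).eval (qInt (n : ℤ)) =
      ∑ π ∈ Finset.univ.filter (fun π => IsLinExt m P π),
        T ((majIdx m π : ℤ)) * ∏ i ∈ Finset.Icc 1 m, qInt ((i : ℤ) - desNum m π + n) := by
  unfold Fpoly
  rw [Polynomial.eval_finset_sum]
  refine Finset.sum_congr rfl fun π _ => ?_
  rw [Polynomial.eval_mul, Polynomial.eval_C, Polynomial.eval_prod]
  congr 1
  refine Finset.prod_congr rfl fun i _ => ?_
  rw [Polynomial.eval_add, Polynomial.eval_C, Polynomial.eval_mul, Polynomial.eval_C,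
    Polynomial.eval_X]
  exact qInt_shift _ n

theorem statement3 (m : ℕ) (hm : 1 ≤ m) (P : PartialOrder (Fin m))
    (hnat : NatLabeled m P) (n : ℕ) :
    (Fpoly m P).eval (qInt (n : ℤ)) =
      (∏ i ∈ Finset.Icc 1 m, qInt (i : ℤ)) *
        ∑ σ ∈ PPset m P n, T (sizePP m n σ : ℤ) := by
  rw [Fpoly_eval]
  have per : ∀ π ∈ Finset.univ.filter (fun π => IsLinExt m P π),
      T ((majIdx m π : ℤ)) * ∏ i ∈ Finset.Icc 1 m, qInt ((i : ℤ) - desNum m π + n) =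
        (∏ i ∈ Finset.Icc 1 m, qInt (i : ℤ)) * ∑ f ∈ compatF m π n, T ((∑ i, f i : ℕ) : ℤ) := by
    intro π _
    rw [compat_sum hm π n]
    split
    case isTrue hdn =>
      have hprod : ∏ i ∈ Finset.Icc 1 m, qInt ((i : ℤ) - desNum m π + n) =
          ∏ i ∈ Finset.Icc 1 m, qInt (((n - desNum m π) + i : ℕ) : ℤ) := by
        refine Finset.prod_congr rfl fun i _ => ?_
        congr 1
        push_cast
        omega
      rw [hprod, ← box_id m (n - desNum m π)]
      ring
    case isFalse hdn =>
      push_neg at hdn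
      rw [mul_zero]
      have hmem : desNum m π - n ∈ Finset.Icc 1 m := by
        have := desNum_le π
        rw [Finset.mem_Icc]
        omega
      have h0 : qInt (((desNum m π - n : ℕ) : ℤ) - desNum m π + n) = 0 := by
        rw [show ((desNum m π - n : ℕ) : ℤ) - desNum m π + n = 0 by push_cast; omega]
        exact qInt_zero
      rw [Finset.prod_eq_zero hmem h0, mul_zero]
  rw [Finset.sum_congr rfl per, ← Finset.mul_sum, ← stanley m hm P hnat n, ← PP_conv]
end

section
/- Let P be a naturally labeled partial order on {1,2,…,m} and let π ∈ L(P) with Des(π) ≠ ∅. Let c be the largest descent of π. Then there exists a permutation σ ∈ L(P) such that Des(σ) = Des(π) \ {c}. -/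
open Finset Polynomial LaurentPolynomial

attribute [local instance] Classical.propDecidable

set_option maxHeartbeats 1600000 in
lemma desset_mem_iff (m : ℕ) (π : Equiv.Perm (Fin m)) (j : ℕ) (h1 : 1 ≤ j) (h2 : j < m)
    (hj1 : j - 1 < m) :
    j ∈ DesSet m π ↔ ((π ⟨j, h2⟩ : ℕ) < (π ⟨j - 1, hj1⟩ : ℕ)) := by
  have hj2 : j + 1 - 1 < m := by omega
  simp only [DesSet, Finset.mem_filter, Finset.mem_Ico]
  simp only [wordAt, dif_pos hj2, dif_pos hj1]
  have he : (⟨j + 1 - 1, hj2⟩ : Fin m) = ⟨j, h2⟩ := rfl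
  rw [he]
  omega

lemma emb_le_emb (m k : ℕ) (S : Finset (Fin m)) (h : S.card = k) (a b : Fin k)
    (hab : (a : ℕ) ≤ (b : ℕ)) :
    ((S.orderEmbOfFin h a : Fin m) : ℕ) ≤ ((S.orderEmbOfFin h b : Fin m) : ℕ) :=
  Fin.le_def.mp ((S.orderEmbOfFin h).monotone (Fin.le_def.mpr hab))

lemma emb_lt_emb (m k : ℕ) (S : Finset (Fin m)) (h : S.card = k) (a b : Fin k)
    (hab : (a : ℕ) < (b : ℕ)) :
    ((S.orderEmbOfFin h a : Fin m) : ℕ) < ((S.orderEmbOfFin h b : Fin m) : ℕ) :=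
  Fin.lt_def.mp ((S.orderEmbOfFin h).strictMono (Fin.lt_def.mpr hab))

lemma emb_reflect_le (m k : ℕ) (S : Finset (Fin m)) (h : S.card = k) (a b : Fin k)
    (hab : ((S.orderEmbOfFin h a : Fin m) : ℕ) ≤ ((S.orderEmbOfFin h b : Fin m) : ℕ)) :
    (a : ℕ) ≤ (b : ℕ) := by
  by_contra hcon
  have := emb_lt_emb m k S h b a (by omega)
  omega

lemma emb_min_le (m k : ℕ) (S : Finset (Fin m)) (h : S.card = k) (a : Fin k)
    (ha : (a : ℕ) = 0) (x : Fin m) (hx : x ∈ S) :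
    ((S.orderEmbOfFin h a : Fin m) : ℕ) ≤ (x : ℕ) := by
  obtain ⟨b, hb⟩ : ∃ b, S.orderEmbOfFin h b = x := by
    have hr : x ∈ Set.range (S.orderEmbOfFin h) := by
      rw [Finset.range_orderEmbOfFin]; exact_mod_cast hx
    exact hr
  rw [← hb]
  exact emb_le_emb m k S h a b (by omega)

set_option maxHeartbeats 1600000 in
theorem statement5 (m : ℕ) (hm : 1 ≤ m) (P : PartialOrder (Fin m))
    (hnat : NatLabeled m P)
    (π : Equiv.Perm (Fin m)) (hπ : IsLinExt m P π)
    (hne : (DesSet m π).Nonempty)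
    (c : ℕ) (hc : IsGreatest (↑(DesSet m π) : Set ℕ) c) :
    ∃ σ : Equiv.Perm (Fin m), IsLinExt m P σ ∧ DesSet m σ = (DesSet m π).erase c := by
  classical
  have hcD : c ∈ DesSet m π := hc.1
  have hcub : ∀ x ∈ DesSet m π, x ≤ c := fun x hx => hc.2 hx
  have hcIco : c ∈ Finset.Ico 1 m := Finset.mem_of_mem_filter _ hcD
  have hc1 : 1 ≤ c := (Finset.mem_Ico.mp hcIco).1
  have hcm : c < m := (Finset.mem_Ico.mp hcIco).2
  obtain ⟨d, hdub, hdalt⟩ : ∃ d, (∀ j ∈ (DesSet m π).erase c, j ≤ d) ∧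
      (d ∈ (DesSet m π).erase c ∨ d = 0) := by
    by_cases hE : ((DesSet m π).erase c).Nonempty
    · exact ⟨((DesSet m π).erase c).max' hE, fun j hj => Finset.le_max' _ j hj,
        Or.inl (Finset.max'_mem _ hE)⟩
    · exact ⟨0, fun j hj => absurd ⟨j, hj⟩ hE, Or.inr rfl⟩
  have hdc : d < c := by
    rcases hdalt with h | h
    · obtain ⟨hne', hmem⟩ := Finset.mem_erase.mp h
      exact lt_of_le_of_ne (hcub d hmem) hne'
    · omega
  have hdm : d < m := lt_trans hdc hcm
  set eb : Fin (m - d) ↪ Fin m :=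
    ⟨fun k => ⟨d + (k : ℕ), by have := k.isLt; omega⟩, by
      intro a b hab
      have h1 := congrArg Fin.val hab
      simp only [Fin.val_mk] at h1
      exact Fin.ext (by omega)⟩ with hebdef
  set S : Finset (Fin m) := Finset.image π (Finset.map eb Finset.univ) with hSdef
  have hScard : S.card = m - d := by
    rw [hSdef, Finset.card_image_of_injective _ π.injective, Finset.card_map,
      Finset.card_univ, Fintype.card_fin]
  have hSmem : ∀ x, x ∈ S ↔ ∃ i : Fin m, d ≤ (i : ℕ) ∧ π i = x := by
    intro x
    rw [hSdef, Finset.mem_image]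
    constructor
    · rintro ⟨a, ha, rfl⟩
      obtain ⟨k, -, rfl⟩ := Finset.mem_map.mp ha
      exact ⟨eb k, by show d ≤ d + (k : ℕ); omega, rfl⟩
    · rintro ⟨i, hi, rfl⟩
      refine ⟨i, Finset.mem_map.mpr ⟨⟨(i : ℕ) - d, by have := i.isLt; omega⟩,
        Finset.mem_univ _, ?_⟩, rfl⟩
      simp only [hebdef, Function.Embedding.coeFn_mk]
      exact Fin.ext (by show d + ((i : ℕ) - d) = i; omega)
  set e := S.orderEmbOfFin hScard with hedef
  set f : Fin m → Fin m :=
    fun i => if h : (i : ℕ) < d then π i else e ⟨(i : ℕ) - d, by have := i.isLt; omega⟩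
    with hfdef
  have hfi : ∀ (i : Fin m), (i : ℕ) < d → f i = π i := fun i h => dif_pos h
  have hf2 : ∀ (i : Fin m) (h : ¬ (i : ℕ) < d),
      f i = e ⟨(i : ℕ) - d, by have := i.isLt; omega⟩ := fun i h => dif_neg h
  have hfSmem : ∀ (i : Fin m), ¬ (i : ℕ) < d → f i ∈ S := by
    intro i h
    rw [hf2 i h]
    exact Finset.orderEmbOfFin_mem S hScard _
  have hfinj : Function.Injective f := by
    intro a b hab
    by_cases ha : (a : ℕ) < d <;> by_cases hb : (b : ℕ) < d
    · rw [hfi a ha, hfi b hb] at hab; exact π.injective hab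
    · exfalso
      have hmem : f b ∈ S := hfSmem b hb
      rw [← hab, hfi a ha] at hmem
      obtain ⟨i, hi, hip⟩ := (hSmem _).mp hmem
      have hia := π.injective hip
      rw [hia] at hi; omega
    · exfalso
      have hmem : f a ∈ S := hfSmem a ha
      rw [hab, hfi b hb] at hmem
      obtain ⟨i, hi, hip⟩ := (hSmem _).mp hmem
      have hib := π.injective hip
      rw [hib] at hi; omega
    · rw [hf2 a ha, hf2 b hb] at hab
      have h1 := e.injective hab
      have h2 : (a : ℕ) - d = (b : ℕ) - d := congrArg Fin.val h1
      exact Fin.ext (by omega)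
  have hfbij : Function.Bijective f := Finite.injective_iff_bijective.mp hfinj
  refine ⟨Equiv.ofBijective f hfbij, ?_, ?_⟩
  · -- linear extension
    intro i j hle
    have hle' : P.le (f i) (f j) := hle
    by_cases hi : (i : ℕ) < d <;> by_cases hj : (j : ℕ) < d
    · rw [hfi i hi, hfi j hj] at hle'
      exact hπ i j hle'
    · exact Fin.le_def.mpr (by omega)
    · exfalso
      rw [hfi j hj] at hle'
      obtain ⟨k, hk, hkp⟩ := (hSmem _).mp (hfSmem i hi)
      rw [← hkp] at hle'
      have := Fin.le_def.mp (hπ k j hle')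
      omega
    · rw [hf2 i hi, hf2 j hj] at hle'
      have hle2 : ((e ⟨(i : ℕ) - d, _⟩ : Fin m) : ℕ) ≤ ((e ⟨(j : ℕ) - d, _⟩ : Fin m) : ℕ) :=
        Fin.le_def.mp (hnat _ _ hle')
      have hle3 := emb_reflect_le m (m - d) S hScard _ _ hle2
      simp only [Fin.val_mk] at hle3
      exact Fin.le_def.mpr (by omega)
  · -- descent set
    have hσ : ∀ x : Fin m, (Equiv.ofBijective f hfbij) x = f x := fun _ => rfl
    ext j
    by_cases hjr : 1 ≤ j ∧ j < m
    · obtain ⟨hj1, hjm⟩ := hjr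
      have hjm1 : j - 1 < m := by omega
      rw [desset_mem_iff m _ j hj1 hjm hjm1, Finset.mem_erase,
        desset_mem_iff m π j hj1 hjm hjm1]
      simp only [hσ]
      rcases lt_trichotomy j d with h | h | h
      · rw [hfi ⟨j, hjm⟩ (by simp only [Fin.val_mk]; omega),
          hfi ⟨j - 1, hjm1⟩ (by simp only [Fin.val_mk]; omega)]
        have hjc : j ≠ c := by omega
        tauto
      · -- j = d
        rcases hdalt with hdmem | h0
        swap
        · omega
        obtain ⟨hdnec, hdD⟩ := Finset.mem_erase.mp hdmem
        have hdD' : j ∈ DesSet m π := by rw [h]; exact hdD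
        have hdesc := (desset_mem_iff m π j hj1 hjm hjm1).mp hdD'
        have hπj_mem : π ⟨j, hjm⟩ ∈ S :=
          (hSmem _).mpr ⟨⟨j, hjm⟩, by simp only [Fin.val_mk]; omega, rfl⟩
        rw [hfi ⟨j - 1, hjm1⟩ (by simp only [Fin.val_mk]; omega),
          hf2 ⟨j, hjm⟩ (by simp only [Fin.val_mk]; omega)]
        constructor
        · exact fun _ => ⟨by omega, hdesc⟩
        · exact fun _ => lt_of_le_of_lt
            (emb_min_le m (m - d) S hScard _ (by simp only [Fin.val_mk]; omega) _ hπj_mem)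
            hdesc
      · -- j > d : no descent for σ here, and j not in erase
        rw [hf2 ⟨j, hjm⟩ (by simp only [Fin.val_mk]; omega),
          hf2 ⟨j - 1, hjm1⟩ (by simp only [Fin.val_mk]; omega)]
        constructor
        · intro hcon
          exact absurd hcon (not_lt.mpr
            (emb_le_emb m (m - d) S hScard _ _ (by simp only [Fin.val_mk]; omega)))
        · rintro ⟨hnec, hdesc⟩
          exfalso
          have hmemD : j ∈ DesSet m π := (desset_mem_iff m π j hj1 hjm hjm1).mpr hdesc
          have := hdub j (Finset.mem_erase.mpr ⟨hnec, hmemD⟩)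
          omega
    · constructor
      · intro h
        have := Finset.mem_Ico.mp (Finset.mem_of_mem_filter _ h)
        omega
      · intro h
        have hmemD := Finset.mem_of_mem_erase h
        have := Finset.mem_Ico.mp (Finset.mem_of_mem_filter _ hmemD)
        omega
end

section
/- Fix integers p ≥ 1, r ≥ 1, k ≥ 0, m ≥ 1 and mutually disjoint subsets C_1,…,C_p of {1,2,…,m} with |C_1|+⋯+|C_{p−1}| ≤ k < |C_1|+⋯+|C_p|, and set u = |C_1|+⋯+|C_p| − k. Let B_1,…,B_r be mutually disjoint subsets of {1,2,…,k} such that B_i ⊆ C_1 ∪ ⋯ ∪ C_{min(i,p)} for all 1 ≤ i ≤ r and B_1 ∪ ⋯ ∪ B_r = {1,2,…,k}. Then |B_1| + 2|B_2| + ⋯ + r|B_r| ≥ |C_1| + 2|C_2| + ⋯ + (p−1)|C_{p−1}| + p(|C_p| − u). -/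
open Finset Polynomial LaurentPolynomial

attribute [local instance] Classical.propDecidable

lemma aux_sum6 (c : ℕ → ℤ) (K : ℤ) (p : ℕ) (hp : 1 ≤ p) :
    (∑ i ∈ Finset.Icc 1 (p-1), (i:ℤ) * c i) + (p:ℤ) * (K - ∑ i ∈ Finset.Icc 1 (p-1), c i)
      = ∑ t ∈ Finset.Icc 1 p, (K - ∑ i ∈ Finset.Icc 1 (t-1), c i) := by
  induction p with
  | zero => omega
  | succ n ih =>
    rcases Nat.lt_or_ge n 1 with h | h
    · interval_cases n
      simp
    · have hIH := ih h
      obtain ⟨q, rfl⟩ : ∃ q, n = q + 1 := ⟨n - 1, by omega⟩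
      simp only [Nat.add_sub_cancel] at hIH ⊢
      rw [Finset.sum_Icc_succ_top (by omega : 1 ≤ q + 1) (fun i => (i:ℤ) * c i),
          Finset.sum_Icc_succ_top (by omega : 1 ≤ q + 1) c,
          Finset.sum_Icc_succ_top (by omega : 1 ≤ q + 1 + 1)
            (fun t => K - ∑ i ∈ Finset.Icc 1 (t-1), c i),
          ← hIH]
      simp only [Nat.add_sub_cancel]
      rw [Finset.sum_Icc_succ_top (by omega : 1 ≤ q + 1) c]
      push_cast
      ring

theorem statement6 (p r k m : ℕ) (hp : 1 ≤ p) (hr : 1 ≤ r) (hm : 1 ≤ m)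
    (C : ℕ → Finset ℕ)
    (hCsub : ∀ i ∈ Finset.Icc 1 p, C i ⊆ Finset.Icc 1 m)
    (hCdisj : ∀ i ∈ Finset.Icc 1 p, ∀ j ∈ Finset.Icc 1 p, i ≠ j → Disjoint (C i) (C j))
    (hk1 : ∑ i ∈ Finset.Icc 1 (p - 1), (C i).card ≤ k)
    (hk2 : k < ∑ i ∈ Finset.Icc 1 p, (C i).card)
    (u : ℕ) (hu : u = (∑ i ∈ Finset.Icc 1 p, (C i).card) - k)
    (B : ℕ → Finset ℕ)
    (hBsub : ∀ i ∈ Finset.Icc 1 r, B i ⊆ Finset.Icc 1 k)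
    (hBdisj : ∀ i ∈ Finset.Icc 1 r, ∀ j ∈ Finset.Icc 1 r, i ≠ j → Disjoint (B i) (B j))
    (hBC : ∀ i ∈ Finset.Icc 1 r, B i ⊆ (Finset.Icc 1 (min i p)).biUnion C)
    (hcover : (Finset.Icc 1 r).biUnion B = Finset.Icc 1 k) :
    (∑ i ∈ Finset.Icc 1 (p - 1), i * (C i).card) + p * ((C p).card - u) ≤
      ∑ i ∈ Finset.Icc 1 r, i * (B i).card := by
  classical
  have hBtot : ∑ i ∈ Finset.Icc 1 r, (B i).card = k := by
    rw [← Finset.card_biUnion hBdisj, hcover, Nat.card_Icc]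
    omega
  have hlow : ∀ t, 1 ≤ t →
      ∑ i ∈ (Finset.Icc 1 r).filter (fun i => i < t), (B i).card
        ≤ ∑ i ∈ Finset.Icc 1 (t-1), (C i).card := by
    intro t ht
    have h1 : ∑ i ∈ (Finset.Icc 1 r).filter (fun i => i < t), (B i).card
        = (((Finset.Icc 1 r).filter (fun i => i < t)).biUnion B).card := by
      rw [Finset.card_biUnion]
      intro x hx y hy hxy
      exact hBdisj x (Finset.mem_filter.mp hx).1 y (Finset.mem_filter.mp hy).1 hxy
    rw [h1]
    calc (((Finset.Icc 1 r).filter (fun i => i < t)).biUnion B).card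
        ≤ ((Finset.Icc 1 (t-1)).biUnion C).card := by
          apply Finset.card_le_card
          intro x hx
          obtain ⟨i, hi, hxB⟩ := Finset.mem_biUnion.mp hx
          have hi' := Finset.mem_filter.mp hi
          obtain ⟨j, hj, hxC⟩ := Finset.mem_biUnion.mp (hBC i hi'.1 hxB)
          have hj' := Finset.mem_Icc.mp hj
          have hmin : min i p ≤ i := min_le_left _ _
          have hit : i < t := hi'.2
          exact Finset.mem_biUnion.mpr ⟨j, Finset.mem_Icc.mpr ⟨hj'.1, by omega⟩, hxC⟩
      _ ≤ ∑ i ∈ Finset.Icc 1 (t-1), (C i).card := Finset.card_biUnion_le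
  have hhigh : ∀ t ∈ Finset.Icc 1 p,
      k - ∑ i ∈ Finset.Icc 1 (t-1), (C i).card
        ≤ ∑ i ∈ (Finset.Icc 1 r).filter (fun i => ¬ i < t), (B i).card := by
    intro t ht
    have ht' := Finset.mem_Icc.mp ht
    have hsplit := Finset.sum_filter_add_sum_filter_not (Finset.Icc 1 r)
      (fun i => i < t) (fun i => (B i).card)
    have h2 := hlow t ht'.1
    omega
  have hswap : ∑ t ∈ Finset.Icc 1 p,
      ∑ i ∈ (Finset.Icc 1 r).filter (fun i => ¬ i < t), (B i).card
      ≤ ∑ i ∈ Finset.Icc 1 r, i * (B i).card := by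
    calc ∑ t ∈ Finset.Icc 1 p, ∑ i ∈ (Finset.Icc 1 r).filter (fun i => ¬ i < t), (B i).card
        = ∑ i ∈ Finset.Icc 1 r, ∑ t ∈ Finset.Icc 1 p, if ¬ i < t then (B i).card else 0 := by
          simp_rw [Finset.sum_filter]
          exact Finset.sum_comm
      _ ≤ ∑ i ∈ Finset.Icc 1 r, i * (B i).card := by
          apply Finset.sum_le_sum
          intro i _
          rw [← Finset.sum_filter, Finset.sum_const, smul_eq_mul]
          have hsub : (Finset.Icc 1 p).filter (fun t => ¬ i < t) ⊆ Finset.Icc 1 i := by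
            intro t ht
            have h := Finset.mem_filter.mp ht
            have h2 := Finset.mem_Icc.mp h.1
            have h3 := h.2
            exact Finset.mem_Icc.mpr ⟨h2.1, by omega⟩
          calc ((Finset.Icc 1 p).filter (fun t => ¬ i < t)).card * (B i).card
              ≤ (Finset.Icc 1 i).card * (B i).card :=
                Nat.mul_le_mul_right _ (Finset.card_le_card hsub)
            _ = i * (B i).card := by rw [Nat.card_Icc]; simp
  have hSp : ∑ i ∈ Finset.Icc 1 p, (C i).card
      = ∑ i ∈ Finset.Icc 1 (p-1), (C i).card + (C p).card := by
    obtain ⟨q, rfl⟩ : ∃ q, p = q + 1 := ⟨p - 1, by omega⟩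
    rw [Finset.sum_Icc_succ_top (by omega : 1 ≤ q + 1)]
    simp
  have hcu : (C p).card - u = k - ∑ i ∈ Finset.Icc 1 (p-1), (C i).card := by omega
  have hmono : ∀ t ∈ Finset.Icc 1 p, ∑ i ∈ Finset.Icc 1 (t-1), (C i).card ≤ k := by
    intro t ht
    have ht' := Finset.mem_Icc.mp ht
    calc ∑ i ∈ Finset.Icc 1 (t-1), (C i).card
        ≤ ∑ i ∈ Finset.Icc 1 (p-1), (C i).card :=
          Finset.sum_le_sum_of_subset (Finset.Icc_subset_Icc_right (by omega))
      _ ≤ k := hk1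
  have hEq : (∑ i ∈ Finset.Icc 1 (p - 1), i * (C i).card) + p * ((C p).card - u)
      = ∑ t ∈ Finset.Icc 1 p, (k - ∑ i ∈ Finset.Icc 1 (t-1), (C i).card) := by
    rw [hcu]
    have haux := aux_sum6 (fun i => ((C i).card : ℤ)) (k : ℤ) p hp
    have hcast : ((∑ t ∈ Finset.Icc 1 p, (k - ∑ i ∈ Finset.Icc 1 (t-1), (C i).card) : ℕ) : ℤ)
        = ∑ t ∈ Finset.Icc 1 p, ((k:ℤ) - ∑ i ∈ Finset.Icc 1 (t-1), ((C i).card:ℤ)) := by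
      rw [Nat.cast_sum]
      refine Finset.sum_congr rfl fun t ht => ?_
      rw [Nat.cast_sub (hmono t ht), Nat.cast_sum]
    have hz : (((∑ i ∈ Finset.Icc 1 (p - 1), i * (C i).card)
          + p * (k - ∑ i ∈ Finset.Icc 1 (p-1), (C i).card) : ℕ) : ℤ)
        = ((∑ t ∈ Finset.Icc 1 p, (k - ∑ i ∈ Finset.Icc 1 (t-1), (C i).card) : ℕ) : ℤ) := by
      rw [hcast, Nat.cast_add, Nat.cast_mul, Nat.cast_sub hk1, Nat.cast_sum, ← haux]
      push_cast
      ring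
    exact_mod_cast hz
  calc (∑ i ∈ Finset.Icc 1 (p - 1), i * (C i).card) + p * ((C p).card - u)
      = ∑ t ∈ Finset.Icc 1 p, (k - ∑ i ∈ Finset.Icc 1 (t-1), (C i).card) := hEq
    _ ≤ ∑ t ∈ Finset.Icc 1 p,
        ∑ i ∈ (Finset.Icc 1 r).filter (fun i => ¬ i < t), (B i).card :=
          Finset.sum_le_sum hhigh
    _ ≤ ∑ i ∈ Finset.Icc 1 r, i * (B i).card := hswap
end

section
/- Let π be a permutation of {1,…,m} with des(π) = s ≥ 1, and let k be an integer with s ≤ k ≤ m. Then t(π,k) is a nonzero polynomial in q and q_min(t(π,k)) = maj(π) − k·s + k(k+1)/2. -/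
open Finset Polynomial LaurentPolynomial

attribute [local instance] Classical.propDecidable

namespace St15

open Finset Polynomial LaurentPolynomial


/-- `f` has no nonzero coefficients below exponent `a`. -/
def LB (f : LaurentPolynomial ℤ) (a : ℤ) : Prop := ∀ i < a, f.coeff i = 0

/-- all coefficients of `f` are nonnegative. -/
def NN (f : LaurentPolynomial ℤ) : Prop := ∀ i, 0 ≤ f.coeff i

lemma LB.mono {f : LaurentPolynomial ℤ} {a b : ℤ} (h : LB f a) (hba : b ≤ a) : LB f b :=
  fun i hi => h i (lt_of_lt_of_le hi hba)

lemma LB_zero (a : ℤ) : LB 0 a := fun i _ => rfl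

lemma LB_T (c : ℤ) : LB (T c) c := by
  intro i hi
  rw [T_apply, if_neg (by omega)]

lemma T_self (c : ℤ) : (T c : LaurentPolynomial ℤ).coeff c = 1 := by
  rw [T_apply, if_pos rfl]

lemma LB_one : LB 1 0 := by
  have := LB_T 0
  rwa [T_zero] at this

lemma LB_add {f g : LaurentPolynomial ℤ} {a : ℤ} (hf : LB f a) (hg : LB g a) : LB (f + g) a := by
  intro i hi
  rw [AddMonoidAlgebra.coeff_add, Finsupp.add_apply, hf i hi, hg i hi, add_zero]

lemma LB_mul {f g : LaurentPolynomial ℤ} {a b : ℤ} (hf : LB f a) (hg : LB g b) :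
    LB (f * g) (a + b) := by
  intro i hi
  rw [AddMonoidAlgebra.coeff_mul]
  simp only [Finsupp.sum]
  apply Finset.sum_eq_zero; intro x hx
  apply Finset.sum_eq_zero; intro y hy
  split_ifs with h
  · rcases lt_or_ge x a with hxa | hxa
    · rw [hf x hxa, zero_mul]
    · rw [hg y (by omega), mul_zero]
  · rfl

lemma mul_boundary {f g : LaurentPolynomial ℤ} {a b : ℤ} (hf : LB f a) (hg : LB g b) :
    (f * g).coeff (a + b) = f.coeff a * g.coeff b := by
  rw [AddMonoidAlgebra.coeff_mul]
  simp only [Finsupp.sum]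
  by_cases ha : f.coeff a = 0
  · rw [ha, zero_mul]
    apply Finset.sum_eq_zero
    intro x hx
    apply Finset.sum_eq_zero
    intro y hy
    have hfx : f.coeff x ≠ 0 := Finsupp.mem_support_iff.mp hx
    split_ifs with h
    · rcases lt_or_ge x a with hxa | hxa
      · exact absurd (hf x hxa) hfx
      · have hxa' : x ≠ a := fun hh => hfx (hh ▸ ha)
        rw [hg y (by omega), mul_zero]
    · rfl
  · rw [Finset.sum_eq_single a]
    · by_cases hb : g.coeff b = 0
      · rw [hb, mul_zero]
        apply Finset.sum_eq_zero
        intro y hy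
        split_ifs with h
        · have : y = b := by omega
          rw [this, hb, mul_zero]
        · rfl
      · rw [Finset.sum_eq_single b]
        · rw [if_pos rfl]
        · intro y hy hyb
          rw [if_neg (by omega)]
        · intro h; exact absurd (Finsupp.mem_support_iff.mpr hb) h
    · intro x hx hxa
      apply Finset.sum_eq_zero
      intro y hy
      have hfx : f.coeff x ≠ 0 := Finsupp.mem_support_iff.mp hx
      have hxge : a ≤ x := by
        by_contra hlt
        exact hfx (hf x (by omega))
      split_ifs with h
      · rw [hg y (by omega), mul_zero]
      · rfl
    · intro h; exact absurd (Finsupp.mem_support_iff.mpr ha) h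

lemma NN_zero : NN (0 : LaurentPolynomial ℤ) := fun _ => le_refl 0

lemma NN_add {f g : LaurentPolynomial ℤ} (hf : NN f) (hg : NN g) : NN (f + g) := by
  intro i
  rw [AddMonoidAlgebra.coeff_add, Finsupp.add_apply]
  exact add_nonneg (hf i) (hg i)

lemma NN_mul {f g : LaurentPolynomial ℤ} (hf : NN f) (hg : NN g) : NN (f * g) := by
  intro i
  rw [AddMonoidAlgebra.coeff_mul]
  simp only [Finsupp.sum]
  apply Finset.sum_nonneg
  intro x hx
  apply Finset.sum_nonneg
  intro y hy
  split_ifs with h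
  · exact mul_nonneg (hf x) (hg y)
  · exact le_refl 0

lemma NN_T (c : ℤ) : NN (T c) := by
  intro i
  rw [T_apply]
  split_ifs <;> norm_num

lemma T_mul_apply (c : ℤ) (f : LaurentPolynomial ℤ) (y : ℤ) :
    ((T c * f : LaurentPolynomial ℤ)).coeff y = f.coeff (y - c) := by
  have : (T c : LaurentPolynomial ℤ) = AddMonoidAlgebra.single c 1 := rfl
  rw [this, AddMonoidAlgebra.coeff_single_mul_apply, one_mul]
  congr 1
  omega



lemma LB_sum {α : Type*} (s : Finset α) (F : α → LaurentPolynomial ℤ) (a : ℤ)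
    (h : ∀ x ∈ s, LB (F x) a) : LB (∑ x ∈ s, F x) a := by
  intro i hi
  rw [AddMonoidAlgebra.coeff_sum, Finsupp.finset_sum_apply]
  exact Finset.sum_eq_zero fun x hx => h x hx i hi

lemma NN_qIntNat (n : ℕ) : NN (qInt (n : ℤ)) := by
  rw [qInt, if_pos (Int.natCast_nonneg n)]
  intro i
  rw [AddMonoidAlgebra.coeff_sum, Finsupp.finset_sum_apply]
  exact Finset.sum_nonneg fun j _ => NN_T _ i

lemma LB_qIntNat (n : ℕ) : LB (qInt (n : ℤ)) 0 := by
  rw [qInt, if_pos (Int.natCast_nonneg n)]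
  apply LB_sum
  intro j _
  exact (LB_T _).mono (Int.natCast_nonneg j)

lemma qIntNat_zero (n : ℕ) (hn : 1 ≤ n) : (qInt (n : ℤ)).coeff 0 = 1 := by
  rw [qInt, if_pos (Int.natCast_nonneg n), AddMonoidAlgebra.coeff_sum, Finsupp.finset_sum_apply]
  rw [Finset.sum_eq_single_of_mem 0 (by simp [Int.toNat_natCast]; omega)]
  · simpa using T_self 0
  · intro j hj hj0
    rw [T_apply, if_neg (by exact_mod_cast hj0)]

lemma tri_succ (j : ℕ) : (j+1)*((j+1)+1)/2 = j*(j+1)/2 + (j+1) := by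
  have h : (j+1)*((j+1)+1) = j*(j+1) + (j+1)*2 := by ring
  rw [h, Nat.add_mul_div_right _ _ (by norm_num : 0 < 2)]

lemma tri_mono {a b : ℕ} (h : a ≤ b) : a*(a+1)/2 ≤ b*(b+1)/2 :=
  Nat.div_le_div_right (Nat.mul_le_mul h (by omega))

/-- the product `∏_{i=1}^t (x - [i]_q)`. -/
noncomputable def Pa (t : ℕ) : Polynomial (LaurentPolynomial ℤ) :=
  ∏ i ∈ Finset.Icc 1 t, (Polynomial.X - Polynomial.C (qInt (i : ℤ)))

/-- the product `∏_{i=1}^n (q^i x + [i]_q)`. -/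
noncomputable def Pb (n : ℕ) : Polynomial (LaurentPolynomial ℤ) :=
  ∏ i ∈ Finset.Icc 1 n,
    (Polynomial.C (T (i : ℤ)) * Polynomial.X + Polynomial.C (qInt (i : ℤ)))

lemma Pb_succ (n : ℕ) :
    Pb (n+1) = Polynomial.C (T ((n:ℤ)+1)) * (Pb n * Polynomial.X)
      + Polynomial.C (qInt ((n:ℤ)+1)) * Pb n := by
  rw [Pb, Pb, Finset.prod_Icc_succ_top (by omega : 1 ≤ n + 1)]
  push_cast
  ring

lemma Pb_props (n : ℕ) (r : ℕ) :
    NN ((Pb n).coeff r) ∧ LB ((Pb n).coeff r) ((r*(r+1)/2 : ℕ) : ℤ) ∧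
    (r ≤ n → 1 ≤ ((Pb n).coeff r).coeff ((r*(r+1)/2 : ℕ) : ℤ)) ∧
    (n < r → (Pb n).coeff r = 0) := by
  induction n generalizing r with
  | zero =>
    have h1 : Pb 0 = 1 := by rw [Pb]; simp
    rw [h1, Polynomial.coeff_one]
    rcases Nat.eq_zero_or_pos r with rfl | hr
    · refine ⟨?_, ?_, ?_, by omega⟩
      · rw [if_pos rfl]; rw [← T_zero]; exact NN_T 0
      · rw [if_pos rfl]; simpa using LB_one
      · intro _
        rw [if_pos rfl]
        have h2 : ((1 : LaurentPolynomial ℤ)).coeff 0 = 1 := by rw [← T_zero]; exact T_self 0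
        simp [h2]
    · rw [if_neg (by omega)]
      exact ⟨NN_zero, LB_zero _, by omega, fun _ => rfl⟩
  | succ n IH =>
    have hco : (Pb (n+1)).coeff r =
        T ((n:ℤ)+1) * (Pb n * Polynomial.X).coeff r + qInt ((n:ℤ)+1) * (Pb n).coeff r := by
      rw [Pb_succ, Polynomial.coeff_add, Polynomial.coeff_C_mul, Polynomial.coeff_C_mul]
    obtain ⟨nn1, lb1, val1, hi1⟩ := IH r
    rcases Nat.eq_zero_or_pos r with rfl | hr
    · -- r = 0
      have hx0 : (Pb n * Polynomial.X).coeff 0 = 0 := by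
        simp [Polynomial.coeff_mul_X_zero]
      rw [hco, hx0, mul_zero, zero_add]
      refine ⟨NN_mul (NN_qIntNat (n+1)) nn1,
        (LB_mul (LB_qIntNat (n+1)) lb1).mono (by omega), ?_, by omega⟩
      intro _
      have hb := mul_boundary (f := qInt ((n:ℤ)+1)) (g := (Pb n).coeff 0)
        (LB_qIntNat (n+1)) lb1
      simp only [zero_add] at hb
      have h1 : (qInt (((n:ℕ)+1 : ℕ) : ℤ)).coeff 0 = 1 := qIntNat_zero (n+1) (by omega)
      push_cast at h1 hb ⊢
      rw [hb, h1, one_mul]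
      exact val1 (by omega)
    · -- r = j + 1
      obtain ⟨j, rfl⟩ : ∃ j, r = j + 1 := ⟨r - 1, by omega⟩
      have hxj : (Pb n * Polynomial.X).coeff (j+1) = (Pb n).coeff j := Polynomial.coeff_mul_X _ _
      rw [hco, hxj]
      obtain ⟨nnj, lbj, valj, hij⟩ := IH j
      have htri : (j+1)*((j+1)+1)/2 = j*(j+1)/2 + (j+1) := tri_succ j
      refine ⟨NN_add (NN_mul (NN_T _) nnj) (NN_mul (NN_qIntNat (n+1)) nn1), ?_, ?_, ?_⟩
      · -- LB
        apply LB_add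
        · rcases le_or_gt j n with hjn | hjn
          · exact (LB_mul (LB_T ((n:ℤ)+1)) lbj).mono (by push_cast [htri]; omega)
          · rw [hij hjn, mul_zero]; exact LB_zero _
        · exact (LB_mul (LB_qIntNat (n+1)) lb1).mono (by omega)
      · -- value at triangular number is ≥ 1
        intro hrn
        rw [AddMonoidAlgebra.coeff_add, Finsupp.add_apply]
        rcases le_or_gt (j+1) n with hjn | hjn
        · -- second summand ≥ 1, first ≥ 0
          have hb := mul_boundary (f := qInt ((n:ℤ)+1)) (g := (Pb n).coeff (j+1))
            (LB_qIntNat (n+1)) lb1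
          simp only [zero_add] at hb
          have h1 : (qInt (((n:ℕ)+1 : ℕ) : ℤ)).coeff 0 = 1 := qIntNat_zero (n+1) (by omega)
          push_cast at h1
          rw [hb, h1, one_mul]
          have hfst : 0 ≤ ((T ((n:ℤ)+1) * (Pb n).coeff j : LaurentPolynomial ℤ)).coeff (((j+1)*((j+1)+1)/2 : ℕ) : ℤ) :=
            NN_mul (NN_T _) nnj _
          have := val1 hjn
          omega
        · -- j + 1 = n + 1, i.e. j = n : first summand ≥ 1, second = 0
          have hjn' : j = n := by omega
          subst hjn'
          have hb := mul_boundary (f := T ((j:ℤ)+1)) (g := (Pb j).coeff j)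
            (LB_T ((j:ℤ)+1)) lbj
          have hT1 : (T ((j:ℤ)+1) : LaurentPolynomial ℤ).coeff ((j:ℤ)+1) = 1 := T_self _
          have hkey : ((T ((j:ℤ)+1) * (Pb j).coeff j : LaurentPolynomial ℤ)).coeff (((j+1)*((j+1)+1)/2 : ℕ) : ℤ)
              = ((Pb j).coeff j).coeff ((j*(j+1)/2 : ℕ) : ℤ) := by
            have harg : (((j+1)*((j+1)+1)/2 : ℕ) : ℤ) = ((j:ℤ)+1) + ((j*(j+1)/2 : ℕ) : ℤ) := by
              push_cast [htri]; omega
            rw [harg, hb, hT1, one_mul]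
          have hsnd : (qInt ((j:ℤ)+1) * (Pb j).coeff (j+1)) = 0 := by
            rw [hi1 (by omega), mul_zero]
          rw [hsnd, AddMonoidAlgebra.coeff_zero, Finsupp.coe_zero, Pi.zero_apply, add_zero, hkey]
          exact valj le_rfl
      · -- vanishing above degree
        intro hrn
        rw [hij (by omega), hi1 (by omega), mul_zero, mul_zero, add_zero]

lemma Pa_LB (t : ℕ) (j : ℕ) : LB ((Pa t).coeff j) 0 := by
  rw [Pa]
  revert j
  refine Finset.prod_induction _ (fun f : Polynomial (LaurentPolynomial ℤ) => ∀ j, LB (f.coeff j) 0) ?_ ?_ ?_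
  · intro f g hf hg j
    rw [Polynomial.coeff_mul]
    apply LB_sum
    intro x _
    exact (LB_mul (hf x.1) (hg x.2)).mono (by omega)
  · intro j
    rw [Polynomial.coeff_one]
    split_ifs
    · exact LB_one
    · exact LB_zero _
  · intro i _ j
    rw [Polynomial.coeff_sub, Polynomial.coeff_X, Polynomial.coeff_C]
    intro y hy
    rw [AddMonoidAlgebra.coeff_sub, Finsupp.sub_apply]
    have h1 : ((if 1 = j then (1:LaurentPolynomial ℤ) else 0)).coeff y = 0 := by
      split_ifs with h
      · exact LB_one y hy
      · rfl
    have h2 : ((if j = 0 then qInt (i:ℤ) else 0)).coeff y = 0 := by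
      split_ifs with h
      · exact LB_qIntNat i y hy
      · rfl
    rw [h1, h2, sub_zero]

lemma Pa_monic (t : ℕ) : (Pa t).Monic :=
  Polynomial.monic_prod_of_monic _ _ fun i _ => Polynomial.monic_X_sub_C _

lemma Pa_natDegree (t : ℕ) : (Pa t).natDegree = t := by
  rw [Pa, Polynomial.natDegree_prod_of_monic _ _ (fun i _ => Polynomial.monic_X_sub_C _)]
  simp [Polynomial.natDegree_X_sub_C]

lemma Pa_coeff_top (t : ℕ) : (Pa t).coeff t = 1 := by
  have h := (Pa_monic t).coeff_natDegree
  rwa [Pa_natDegree] at h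

lemma Pa_coeff_hi (t : ℕ) {j : ℕ} (h : t < j) : (Pa t).coeff j = 0 :=
  Polynomial.coeff_eq_zero_of_natDegree_lt (by rw [Pa_natDegree]; exact h)

end St15

theorem statement15 (m : ℕ) (π : Equiv.Perm (Fin m))
    (s : ℕ) (hs : desNum m π = s) (hs1 : 1 ≤ s)
    (k : ℕ) (hks : s ≤ k) (hkm : k ≤ m) :
    tpoly m π k ≠ 0 ∧
    IsLeast {i : ℤ | (tpoly m π k).coeff i ≠ 0}
      ((majIdx m π : ℤ) - k * s + k * (k + 1) / 2) := by 
  classical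
  set mj : ℕ := majIdx m π with hmj
  open St15 in
  -- rewrite tpoly in terms of Pa, Pb
  have hdecomp : tpoly m π k
      = T ((mj : ℤ) - ((s * (s-1) / 2 : ℕ) : ℤ)) * ((Pa (s-1) * Pb (m-s)).coeff (k-1)) := by
    rw [tpoly, tSummand, hs, mul_assoc, Polynomial.coeff_C_mul]
    rfl
  set E : ℕ := (k-s)*((k-s)+1)/2 with hE
  set c : ℤ := (mj : ℤ) - ((s * (s-1) / 2 : ℕ) : ℤ) with hc
  set g : LaurentPolynomial ℤ := (Pa (s-1) * Pb (m-s)).coeff (k-1) with hg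
  have hgsum : g = ∑ x ∈ Finset.HasAntidiagonal.antidiagonal (k-1),
      (Pa (s-1)).coeff x.1 * (Pb (m-s)).coeff x.2 := by
    rw [hg, Polynomial.coeff_mul]
  -- lower bound for g
  have hgLB : St15.LB g (E : ℤ) := by
    rw [hgsum]
    apply St15.LB_sum
    rintro ⟨a, b⟩ hab
    rw [Finset.HasAntidiagonal.mem_antidiagonal] at hab
    rcases le_or_gt a (s-1) with ha | ha
    · have hb : k - s ≤ b := by omega
      have := (Pb_props (m-s) b).2.1
      refine (St15.LB_mul (Pa_LB (s-1) a) this).mono ?_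
      have := tri_mono hb
      simp only [zero_add]
      exact_mod_cast this
    · rw [Pa_coeff_hi _ ha, zero_mul]
      exact St15.LB_zero _
  -- value of g at E
  have hgE : 1 ≤ g.coeff (E : ℤ) := by
    rw [hgsum, AddMonoidAlgebra.coeff_sum, Finsupp.finset_sum_apply]
    rw [Finset.sum_eq_single_of_mem (⟨s-1, k-s⟩ : ℕ × ℕ)
      (Finset.HasAntidiagonal.mem_antidiagonal.mpr (by omega))]
    · rw [Pa_coeff_top, one_mul]
      exact (Pb_props (m-s) (k-s)).2.2.1 (by omega)
    · rintro ⟨a, b⟩ hab hne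
      rw [Finset.HasAntidiagonal.mem_antidiagonal] at hab
      rcases lt_or_ge (s-1) a with ha | ha
      · rw [Pa_coeff_hi _ ha, zero_mul, AddMonoidAlgebra.coeff_zero, Finsupp.coe_zero, Pi.zero_apply]
      · have ha' : a < s - 1 := by
          rcases lt_or_eq_of_le ha with h | h
          · exact h
          · exact absurd (by simp [← h]; omega : (⟨a,b⟩ : ℕ × ℕ) = ⟨s-1, k-s⟩) hne
        have hb : k - s + 1 ≤ b := by omega
        have hlt : (E : ℤ) < ((b*(b+1)/2 : ℕ) : ℤ) := by
          have h1 : (k-s)*((k-s)+1)/2 + (k-s+1) ≤ b*(b+1)/2 := by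
            calc (k-s)*((k-s)+1)/2 + (k-s+1) = ((k-s)+1)*(((k-s)+1)+1)/2 := (tri_succ _).symm
            _ ≤ b*(b+1)/2 := tri_mono hb
          exact_mod_cast (by omega : E < b*(b+1)/2)
        exact (St15.LB_mul (Pa_LB (s-1) a) ((Pb_props (m-s) b).2.1)).mono
          (by omega) _ hlt
  have hval : ∀ i : ℤ, (tpoly m π k).coeff i = g.coeff (i - c) := by
    intro i
    rw [hdecomp]
    exact St15.T_mul_apply c g i
  have hne : (tpoly m π k).coeff (c + E) ≠ 0 := by
    rw [hval, add_sub_cancel_left]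
    omega
  -- arithmetic: c + E equals the stated value
  have harith : (mj : ℤ) - (k : ℤ) * (s : ℤ) + (k : ℤ) * ((k : ℤ) + 1) / 2 = c + (E : ℤ) := by
    have e1 : ((s*(s-1)/2 : ℕ) : ℤ) * 2 = (s:ℤ)*(s:ℤ) - (s:ℤ) := by
      have hdvd : 2 ∣ s*(s-1) := by
        have : s*(s-1) = (s-1)*((s-1)+1) := by
          rw [Nat.sub_add_cancel hs1]; ring
        rw [this]
        exact (Nat.even_mul_succ_self (s-1)).two_dvd
      have h := Nat.div_mul_cancel hdvd
      have hcast : ((s*(s-1) : ℕ) : ℤ) = (s:ℤ)*(s:ℤ) - (s:ℤ) := by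
        push_cast [Nat.cast_sub hs1]
        ring
      omega
    have e2 : ((E : ℕ) : ℤ) * 2
        = (k:ℤ)*(k:ℤ) - 2*((k:ℤ)*(s:ℤ)) + (s:ℤ)*(s:ℤ) + (k:ℤ) - (s:ℤ) := by
      have hdvd : 2 ∣ (k-s)*((k-s)+1) := (Nat.even_mul_succ_self (k-s)).two_dvd
      have h := Nat.div_mul_cancel hdvd
      have hcast : (((k-s)*((k-s)+1) : ℕ) : ℤ)
          = (k:ℤ)*(k:ℤ) - 2*((k:ℤ)*(s:ℤ)) + (s:ℤ)*(s:ℤ) + (k:ℤ) - (s:ℤ) := by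
        push_cast [Nat.cast_sub hks]
        ring
      rw [hE]
      omega
    have e3 : ((k:ℤ) * ((k:ℤ) + 1) / 2) * 2 = (k:ℤ)*(k:ℤ) + (k:ℤ) := by
      have hdvd : (2:ℤ) ∣ (k:ℤ) * ((k:ℤ) + 1) := (Int.even_mul_succ_self (k:ℤ)).two_dvd
      have h := Int.ediv_mul_cancel hdvd
      have hx : (k:ℤ)*((k:ℤ)+1) = (k:ℤ)*(k:ℤ) + (k:ℤ) := by ring
      omega
    rw [hc]
    linarith [e1, e2, e3]
  constructor
  · intro h0
    rw [h0] at hne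
    simp at hne
  · constructor
    · rw [Set.mem_setOf_eq, harith]
      exact hne
    · intro i hi
      rw [Set.mem_setOf_eq, hval] at hi
      have : ¬ (i - c < (E : ℤ)) := fun hlt => hi (hgLB _ hlt)
      rw [harith]
      omega
end
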